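/- Let E, F be closed subspaces of a Banach space B with B = E ⊕ F. Then |π_{E⊕F}|^{-1} = α(E, F), where α(E, F) = inf{ |e − f| : e ∈ E, |e| = 1, f ∈ F }. Moreover, α(E, F) ≤ 2 α(F, E). -/

import Mathlib

open MeasureTheory Filter Metric Module Submodule Set

noncomputable section

namespace BY

variable {B B' : Type*}

/-- The unit sphere of a subspace `E`. -/
def subSphere [NormedAddCommGroup B] [NormedSpace ℝ B] (E : Submodule ℝ B) : Set B :=
  {v : B | v ∈ E ∧ ‖v‖ = 1}

/-- `d_H(E, E')`: the Hausdorff distance between the unit spheres of `E` and `E'`. -/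
def dH [NormedAddCommGroup B] [NormedSpace ℝ B] (E E' : Submodule ℝ B) : ℝ :=
  Metric.hausdorffDist (subSphere E) (subSphere E')

/-- The supremum of `‖π x‖` over `x ∈ S`, where `π` is the projection onto `E` along `F`. -/
def projNormOn [NormedAddCommGroup B] [NormedSpace ℝ B] (E F : Submodule ℝ B)
    (h : IsCompl E F) (S : Set B) : ℝ :=
  sSup ((fun x => ‖(E.linearProjOfIsCompl F h x : B)‖) '' S)

/-- `|π_{E⊕F}|`: the operator norm of the projection onto `E` along `F`. -/
def projNorm [NormedAddCommGroup B] [NormedSpace ℝ B] (E F : Submodule ℝ B)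
    (h : IsCompl E F) : ℝ :=
  projNormOn E F h (Metric.closedBall 0 1)

/-- `α(E, F) = inf { ‖e - f‖ : e ∈ E, ‖e‖ = 1, f ∈ F }`. -/
def alphaAngle [NormedAddCommGroup B] [NormedSpace ℝ B] (E F : Submodule ℝ B) : ℝ :=
  sInf {r : ℝ | ∃ e ∈ E, ∃ f ∈ F, ‖e‖ = 1 ∧ r = ‖e - f‖}

/-- `ω_k`: the volume of the Euclidean unit ball in `ℝ^k`. -/
def euclideanBallVol (k : ℕ) : ENNReal :=
  volume (Metric.closedBall (0 : EuclideanSpace ℝ (Fin k)) 1)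

/-- `μ` is the induced volume `m_E` on the `k`-dimensional subspace `E`: the (unique) Haar
measure on `E` assigning mass `ω_k` to the unit ball of `E`. -/
def IsInducedVolume [NormedAddCommGroup B] [NormedSpace ℝ B] [MeasurableSpace B]
    (E : Submodule ℝ B) (k : ℕ) (μ : Measure E) : Prop :=
  Measure.IsAddHaarMeasure μ ∧ μ {v : E | ‖v‖ ≤ 1} = euclideanBallVol k

/-- `det(A|E)`, computed with respect to induced volumes `μE` on `E` and `μF` on a
subspace `F` containing `A(E)`: the ratio `μF(A(B_E)) / μE(B_E)` where `B_E` is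
the unit ball of `E`. -/
def detIn [NormedAddCommGroup B] [NormedSpace ℝ B] [NormedAddCommGroup B'] [NormedSpace ℝ B']
    [MeasurableSpace B] [MeasurableSpace B']
    (A : B →L[ℝ] B') (E : Submodule ℝ B) (F : Submodule ℝ B')
    (μE : Measure E) (μF : Measure F) : ℝ :=
  (μF {w : F | ∃ v : B, v ∈ E ∧ ‖v‖ ≤ 1 ∧ A v = (w : B')}).toReal /
    (μE {v : E | ‖v‖ ≤ 1}).toReal

/-- `P[v₁, …, v_k]`: the parallelepiped spanned by the vectors `v i`. -/
def pped [AddCommGroup B] [Module ℝ B] {k : ℕ} (v : Fin k → B) : Set B :=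
  {x : B | ∃ a : Fin k → ℝ, (∀ i, a i ∈ Set.Icc (0 : ℝ) 1) ∧ x = ∑ i, a i • v i}

/-- `N[v₁, …, v_k]`: the sum of the norms of the projections, within the span of the `v i`,
onto each `⟨v i⟩` along the span of the other basis vectors. -/
def Nquan [NormedAddCommGroup B] [NormedSpace ℝ B] {k : ℕ} (v : Fin k → B) : ℝ :=
  ∑ i, sSup {r : ℝ | ∃ a : Fin k → ℝ, ‖∑ j, a j • v j‖ ≤ 1 ∧ r = ‖a i • v i‖}

/-- The operator norm of the restriction of `A` to the subspace `E`. -/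
def opNormOnSub [NormedAddCommGroup B] [NormedSpace ℝ B] [NormedAddCommGroup B']
    [NormedSpace ℝ B'] (A : B →L[ℝ] B') (E : Submodule ℝ B) : ℝ :=
  sSup {r : ℝ | ∃ v ∈ E, ‖v‖ ≤ 1 ∧ r = ‖A v‖}

/-- The `n`-th iterate (`n ∈ ℤ`) of the invertible pair `(f, g)`, `g = f⁻¹`. -/
def zIter {X : Type*} (f g : X → X) (n : ℤ) (x : X) : X :=
  if 0 ≤ n then f^[n.toNat] x else g^[(-n).toNat] x

/-- `ψ'(x) = sup_{n ∈ ℤ} e^{-|n| δ} ψ(f^n x)`. -/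
def psiSup {X : Type*} (f g : X → X) (ψ : X → ℝ) (δ : ℝ) (x : X) : ℝ :=
  sSup (Set.range fun n : ℤ => Real.exp (-|(n : ℝ)| * δ) * ψ (zIter f g n x))

/-- The cocycle `T^n_x = T_{f^{n-1} x} ∘ ⋯ ∘ T_x`. -/
def cocycle {X : Type*} [NormedAddCommGroup B] [NormedSpace ℝ B]
    (f : X → X) (T : X → B →L[ℝ] B) : ℕ → X → B →L[ℝ] B
  | 0, _ => ContinuousLinearMap.id ℝ B
  | n + 1, x => (cocycle f T n (f x)).comp (T x)

end BY

end
/-- Sect. 2.1.2 of the paper. Let `E, F` be closed subspaces of a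
Banach space `B` with `B = E ⊕ F`. Then `|π_{E⊕F}|⁻¹ = α(E, F)`, where
`α(E, F) = inf { |e - f| : e ∈ E, |e| = 1, f ∈ F }`; moreover `α(E, F) ≤ 2 α(F, E)`. -/
theorem statement13 {B : Type*} [NormedAddCommGroup B] [NormedSpace ℝ B] [CompleteSpace B]
    (E F : Submodule ℝ B)
    (hEc : IsClosed (E : Set B)) (hFc : IsClosed (F : Set B))
    (hEbot : E ≠ ⊥) (hFbot : F ≠ ⊥)
    (h : IsCompl E F) :
    (BY.projNorm E F h)⁻¹ = BY.alphaAngle E F ∧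
    BY.alphaAngle E F ≤ 2 * BY.alphaAngle F E := by
  classical
  set P := E.linearProjOfClosedCompl F h hEc hFc with hPdef
  have hproj : BY.projNorm E F h = ‖P‖ := by
    rw [← P.sSup_unitClosedBall_eq_norm]
    rfl
  -- unit vectors
  obtain ⟨e₀, he₀E, he₀⟩ := Submodule.exists_mem_ne_zero_of_ne_bot hEbot
  obtain ⟨f₀, hf₀F, hf₀⟩ := Submodule.exists_mem_ne_zero_of_ne_bot hFbot
  set u : B := ‖e₀‖⁻¹ • e₀ with hu
  have huE : u ∈ E := E.smul_mem _ he₀E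
  have hunorm : ‖u‖ = 1 := norm_smul_inv_norm he₀
  set w : B := ‖f₀‖⁻¹ • f₀ with hw
  have hwF : w ∈ F := F.smul_mem _ hf₀F
  have hwnorm : ‖w‖ = 1 := norm_smul_inv_norm hf₀
  set SEF := {r : ℝ | ∃ e ∈ E, ∃ f ∈ F, ‖e‖ = 1 ∧ r = ‖e - f‖} with hSEF
  set SFE := {r : ℝ | ∃ e ∈ F, ∃ f ∈ E, ‖e‖ = 1 ∧ r = ‖e - f‖} with hSFE
  have hSEFne : SEF.Nonempty := ⟨1, u, huE, 0, F.zero_mem, hunorm, by simp [hunorm]⟩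
  have hSFEne : SFE.Nonempty := ⟨1, w, hwF, 0, E.zero_mem, hwnorm, by simp [hwnorm]⟩
  have hSEFbdd : BddBelow SEF := ⟨0, by rintro r ⟨e, -, f, -, -, rfl⟩; positivity⟩
  have hSFEbdd : BddBelow SFE := ⟨0, by rintro r ⟨e, -, f, -, -, rfl⟩; positivity⟩
  have hαEF : BY.alphaAngle E F = sInf SEF := rfl
  have hαFE : BY.alphaAngle F E = sInf SFE := rfl
  -- P applied to members
  have hPapply : ∀ e ∈ E, ∀ f ∈ F, ((P (e - f) : E) : B) = e := by
    intro e he f hf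
    have h1 : (P e : E) = ⟨e, he⟩ := Submodule.linearProjOfIsCompl_apply_left h ⟨e, he⟩
    have h2 : (P f : E) = 0 := Submodule.projectionOnto_apply_of_mem_right h hf
    have : (P (e - f) : E) = P e - P f := map_sub P e f
    rw [this, h1, h2]
    simp
  have hP1 : 1 ≤ ‖P‖ := by
    have h1 : ‖P u‖ ≤ ‖P‖ * ‖u‖ := P.le_opNorm u
    have h2 : ((P u : E) : B) = u := by
      have := hPapply u huE 0 F.zero_mem
      simpa using this
    have h3 : ‖P u‖ = ‖u‖ := by rw [show ‖P u‖ = ‖((P u : E) : B)‖ from rfl, h2]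
    rw [h3, hunorm] at h1
    linarith
  have hPpos : (0 : ℝ) < ‖P‖ := lt_of_lt_of_le one_pos hP1
  -- Step A : ‖P‖⁻¹ ≤ α(E,F)
  have hA : ‖P‖⁻¹ ≤ sInf SEF := by
    apply le_csInf hSEFne
    rintro r ⟨e, he, f, hf, hnorm, rfl⟩
    have h1 : ‖P (e - f)‖ ≤ ‖P‖ * ‖e - f‖ := P.le_opNorm _
    have h2 : ‖P (e - f)‖ = 1 := by
      rw [show ‖P (e - f)‖ = ‖((P (e - f) : E) : B)‖ from rfl, hPapply e he f hf, hnorm]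
    rw [h2] at h1
    rw [inv_le_iff_one_le_mul₀ hPpos]
    linarith [mul_comm ‖P‖ ‖e - f‖]
  have hαpos : 0 < sInf SEF := lt_of_lt_of_le (inv_pos.2 hPpos) hA
  -- Step B : ‖P‖ ≤ (sInf SEF)⁻¹
  have hB : ‖P‖ ≤ (sInf SEF)⁻¹ := by
    apply P.opNorm_le_bound (by positivity)
    intro x
    by_cases hx : (P x : E) = 0
    · rw [show ‖P x‖ = ‖((P x : E) : B)‖ from rfl, hx]
      simp only [Submodule.coe_zero, norm_zero]
      positivity
    · set e' : B := ((P x : E) : B) with he'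
      have he'E : e' ∈ E := (P x : E).2
      have he'ne : e' ≠ 0 := fun hc => hx (by exact_mod_cast Subtype.ext hc)
      have hc : (0 : ℝ) < ‖e'‖ := norm_pos_iff.2 he'ne
      have hxsub : x - e' ∈ F := by
        have := Submodule.projection_add_projection_eq_self h x
        have h2 : x - e' = ((F.linearProjOfIsCompl E h.symm x : F) : B) := by
          rw [he', hPdef]
          rw [show ((E.linearProjOfClosedCompl F h hEc hFc x : E) : B)
            = ((E.linearProjOfIsCompl F h x : E) : B) from rfl]
          rw [sub_eq_iff_eq_add']
          exact this.symm
        rw [h2]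
        exact (F.linearProjOfIsCompl E h.symm x).2
      have hmem : ‖e'‖⁻¹ * ‖x‖ ∈ SEF := by
        refine ⟨‖e'‖⁻¹ • e', E.smul_mem _ he'E, ‖e'‖⁻¹ • (e' - x),
          F.smul_mem _ (by simpa using F.neg_mem hxsub), norm_smul_inv_norm he'ne, ?_⟩
        rw [← smul_sub]
        have : e' - (e' - x) = x := by abel
        rw [this, norm_smul, norm_inv, norm_norm]
      have hle : sInf SEF ≤ ‖e'‖⁻¹ * ‖x‖ := csInf_le hSEFbdd hmem
      have hPx : ‖P x‖ = ‖e'‖ := rfl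
      have h1 : sInf SEF * ‖e'‖ ≤ ‖x‖ :=
        (le_div_iff₀ hc).1 (by rwa [div_eq_inv_mul])
      rw [hPx, ← div_eq_inv_mul, le_div_iff₀ hαpos]
      linarith [mul_comm ‖e'‖ (sInf SEF)]
  have heq : (BY.projNorm E F h)⁻¹ = BY.alphaAngle E F := by
    rw [hproj, hαEF]
    have h1 : ((sInf SEF)⁻¹)⁻¹ ≤ ‖P‖⁻¹ := inv_anti₀ hPpos hB
    rw [inv_inv] at h1
    exact le_antisymm hA h1
  refine ⟨heq, ?_⟩
  -- Step C
  have hα1 : sInf SEF ≤ 1 := csInf_le hSEFbdd ⟨u, huE, 0, F.zero_mem, hunorm, by simp [hunorm]⟩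
  rw [hαEF, hαFE]
  have hhalf : sInf SEF / 2 ≤ sInf SFE := by
    apply le_csInf hSFEne
    rintro r ⟨f, hfF, e, heE, hfnorm, rfl⟩
    have hr0 : (0 : ℝ) ≤ ‖f - e‖ := norm_nonneg _
    by_cases hcase : (1 : ℝ) / 2 ≤ ‖f - e‖
    · linarith
    · push_neg at hcase
      have hne : (0 : ℝ) < ‖e‖ := by
        have := norm_sub_norm_le f e
        rw [hfnorm] at this
        linarith
      have hene : e ≠ 0 := norm_pos_iff.1 hne
      have hmem : ‖e‖⁻¹ * ‖f - e‖ ∈ SEF := by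
        refine ⟨‖e‖⁻¹ • e, E.smul_mem _ heE, ‖e‖⁻¹ • f, F.smul_mem _ hfF,
          norm_smul_inv_norm hene, ?_⟩
        rw [← smul_sub, norm_smul, norm_inv, norm_norm, norm_sub_rev]
      have hle : sInf SEF ≤ ‖e‖⁻¹ * ‖f - e‖ := csInf_le hSEFbdd hmem
      have h2 : ‖e‖⁻¹ ≤ 2 := by
        rw [inv_le_comm₀ hne (by norm_num)]
        have := norm_sub_norm_le f e
        rw [hfnorm] at this
        linarith
      have : ‖e‖⁻¹ * ‖f - e‖ ≤ 2 * ‖f - e‖ := mul_le_mul_of_nonneg_right h2 hr0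
      linarith
  linarith
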